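/- If r is a regular closed polygon in ℝ², then r can be written as r = r₁ + r₂ where r₁, r₂ are regular closed polygons each with connected complement: ℝ² \ rᵢ is connected for i = 1, 2. -/
import Mathlib

open Set Metric Filter

/-! ### Auxiliary geometry in the plane -/

namespace PolygonAux

abbrev Pt := Fin 2 → ℝ

def dot (v w : Pt) : ℝ := v 0 * w 0 + v 1 * w 1

lemma isLinearMap_dot (v : Pt) : IsLinearMap ℝ (fun x => dot v x) := by
  constructor
  · intro x y; simp [dot]; ring
  · intro c x; simp [dot]; ring

lemma continuous_dot (v : Pt) : Continuous (fun x => dot v x) := by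
  have : Continuous fun x : Pt => v 0 * x 0 + v 1 * x 1 := by fun_prop
  simpa [dot] using this

lemma dot_nonneg_self (v : Pt) : 0 ≤ dot v v := by
  simp only [dot]; nlinarith [mul_self_nonneg (v 0), mul_self_nonneg (v 1)]

lemma dot_self_pos {v : Pt} (hv : v ≠ 0) : 0 < dot v v := by
  rcases (dot_nonneg_self v).lt_or_eq with h | h
  · exact h
  · exfalso; apply hv
    have h0 : v 0 * v 0 + v 1 * v 1 = 0 := by simpa [dot] using h.symm
    have h1 : v 0 = 0 := by nlinarith [mul_self_nonneg (v 0), mul_self_nonneg (v 1)]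
    have h2 : v 1 = 0 := by nlinarith [mul_self_nonneg (v 0), mul_self_nonneg (v 1)]
    funext i; fin_cases i <;> simp [h1, h2]

def rot (v : Pt) : Pt := ![-(v 1), v 0]

lemma rot_ne_zero {v : Pt} (hv : v ≠ 0) : rot v ≠ 0 := by
  intro h; apply hv
  have h0 : rot v 0 = 0 := by rw [h]; rfl
  have h1 : rot v 1 = 0 := by rw [h]; rfl
  simp [rot] at h0 h1
  funext i; fin_cases i <;> simp [h0, h1]

lemma dot_rot_self (v : Pt) : dot (rot v) v = 0 := by simp [dot, rot]; ring

lemma dot_neg_left (v w : Pt) : dot (-v) w = -(dot v w) := by simp [dot]; ring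

lemma dot_zero_right (v : Pt) : dot v 0 = 0 := by simp [dot]

lemma decomp (v w : Pt) (i : Fin 2) :
    dot v v * w i = dot v w * v i + dot (rot v) w * rot v i := by
  fin_cases i <;> (simp [dot, rot]; ring)

lemma neg_ne_zero' {v : Pt} (hv : v ≠ 0) : -v ≠ 0 := by
  intro h; apply hv
  have := congrArg (fun w : Pt => -w) h
  simpa using this

lemma sum_eq_dot (a x : Pt) : (∑ i, a i * x i) = dot a x := by
  rw [Fin.sum_univ_two]; rfl

/-- closed half plane as a set -/
def HP (w : Pt) (c : ℝ) : Set Pt := {x | dot w x ≤ c}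

lemma mem_HP {w : Pt} {c : ℝ} {x : Pt} (h : dot w x ≤ c) : x ∈ HP w c := h

lemma HP_closed (w : Pt) (c : ℝ) : IsClosed (HP w c) :=
  isClosed_le (continuous_dot w) continuous_const

lemma HP_convex (w : Pt) (c : ℝ) : Convex ℝ (HP w c) :=
  convex_halfSpace_le (isLinearMap_dot w) c

/-- closed thickened segment from 0 to v -/
def Rect (v : Pt) (ε : ℝ) : Set Pt :=
  HP (rot v) ε ∩ HP (-(rot v)) ε ∩ HP v (dot v v + ε) ∩ HP (-v) ε

/-- open thickened segment -/
def ORect (v : Pt) (ε : ℝ) : Set Pt :=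
  {x | dot (rot v) x < ε} ∩ {x | dot (-(rot v)) x < ε} ∩
    {x | dot v x < dot v v + ε} ∩ {x | dot (-v) x < ε}

lemma mem_Rect_iff (v : Pt) (ε : ℝ) (x : Pt) : x ∈ Rect v ε ↔
    dot (rot v) x ≤ ε ∧ -(dot (rot v) x) ≤ ε ∧ dot v x ≤ dot v v + ε ∧ -(dot v x) ≤ ε := by
  simp only [Rect, HP, mem_inter_iff, mem_setOf_eq, dot_neg_left]
  tauto

lemma mem_ORect_iff (v : Pt) (ε : ℝ) (x : Pt) : x ∈ ORect v ε ↔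
    dot (rot v) x < ε ∧ -(dot (rot v) x) < ε ∧ dot v x < dot v v + ε ∧ -(dot v x) < ε := by
  simp only [ORect, mem_inter_iff, mem_setOf_eq, dot_neg_left]
  tauto

lemma ORect_subset (v : Pt) (ε : ℝ) : ORect v ε ⊆ Rect v ε := by
  intro x hx
  rw [mem_ORect_iff] at hx
  rw [mem_Rect_iff]
  exact ⟨hx.1.le, hx.2.1.le, hx.2.2.1.le, hx.2.2.2.le⟩

lemma ORect_open (v : Pt) (ε : ℝ) : IsOpen (ORect v ε) :=
  (((isOpen_lt (continuous_dot _) continuous_const).inter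
    (isOpen_lt (continuous_dot _) continuous_const)).inter
    (isOpen_lt (continuous_dot _) continuous_const)).inter
    (isOpen_lt (continuous_dot _) continuous_const)

lemma ORect_convex (v : Pt) (ε : ℝ) : Convex ℝ (ORect v ε) :=
  (((convex_halfSpace_lt (isLinearMap_dot _) _).inter
    (convex_halfSpace_lt (isLinearMap_dot _) _)).inter
    (convex_halfSpace_lt (isLinearMap_dot _) _)).inter
    (convex_halfSpace_lt (isLinearMap_dot _) _)

lemma zero_mem_ORect (v : Pt) {ε : ℝ} (hε : 0 < ε) : (0:Pt) ∈ ORect v ε := by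
  rw [mem_ORect_iff]
  simp only [dot_zero_right, neg_zero]
  refine ⟨hε, hε, ?_, hε⟩
  linarith [dot_nonneg_self v]

lemma v_mem_ORect (v : Pt) {ε : ℝ} (hε : 0 < ε) : v ∈ ORect v ε := by
  rw [mem_ORect_iff]
  simp only [dot_rot_self, neg_zero]
  exact ⟨hε, hε, by linarith, by linarith [dot_nonneg_self v]⟩

lemma Rect_closed (v : Pt) (ε : ℝ) : IsClosed (Rect v ε) :=
  (((HP_closed _ _).inter (HP_closed _ _)).inter (HP_closed _ _)).inter (HP_closed _ _)

lemma Rect_convex (v : Pt) (ε : ℝ) : Convex ℝ (Rect v ε) :=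
  (((HP_convex _ _).inter (HP_convex _ _)).inter (HP_convex _ _)).inter (HP_convex _ _)

lemma Rect_star (v : Pt) (ε : ℝ) {y : Pt} (hy : y ∈ Rect v ε) {s : ℝ}
    (h0 : 0 ≤ s) (h1 : s ≤ 1) : s • y ∈ Rect v ε := by
  rw [mem_Rect_iff] at hy
  obtain ⟨a1, a2, a3, a4⟩ := hy
  have hεnn : 0 ≤ ε := by linarith
  rw [mem_Rect_iff]
  have hs1 := (isLinearMap_dot (rot v)).map_smul s y
  have hs2 := (isLinearMap_dot v).map_smul s y
  simp only [smul_eq_mul] at hs1 hs2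
  rw [hs1, hs2]
  refine ⟨?_, ?_, ?_, ?_⟩ <;> nlinarith [dot_nonneg_self v]

/-- bound for rectangle -/
lemma Rect_bound {v : Pt} (hv : v ≠ 0) {ε : ℝ} (hε : 0 < ε) :
    ∃ M : ℝ, 0 < M ∧ ∀ x ∈ Rect v ε, ‖x‖ < M := by
  have hvv := dot_self_pos hv
  set B : ℝ := ((dot v v + ε) * (|v 0| + |v 1|) + ε * (|v 0| + |v 1|)) / dot v v + 1 with hB
  have h1 : 0 ≤ (dot v v + ε) * (|v 0| + |v 1|) + ε * (|v 0| + |v 1|) := by positivity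
  have h2 := div_nonneg h1 (le_of_lt hvv)
  have hBpos : 0 < B := by rw [hB]; linarith
  refine ⟨B, hBpos, ?_⟩
  intro x hx
  rw [mem_Rect_iff] at hx
  obtain ⟨a1, a2, a3, a4⟩ := hx
  have hcoord : ∀ i, |x i| ≤ B - 1 := by
    intro i
    have hdec := decomp v x i
    have hub : |dot v x| ≤ dot v v + ε := by
      rw [abs_le]; constructor <;> nlinarith
    have hub2 : |dot (rot v) x| ≤ ε := by
      rw [abs_le]; constructor <;> nlinarith
    have hvi : |v i| ≤ |v 0| + |v 1| := by
      fin_cases i <;> simp <;> positivity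
    have hri : |rot v i| ≤ |v 0| + |v 1| := by
      fin_cases i <;> simp [rot, abs_neg] <;>
        first
          | linarith [abs_nonneg (v 0), abs_nonneg (v 1)]
          | skip
    have key : |dot v v * x i| ≤ (dot v v + ε) * (|v 0| + |v 1|) + ε * (|v 0| + |v 1|) := by
      rw [hdec]
      calc |dot v x * v i + dot (rot v) x * rot v i|
          ≤ |dot v x * v i| + |dot (rot v) x * rot v i| := abs_add_le _ _
        _ = |dot v x| * |v i| + |dot (rot v) x| * |rot v i| := by rw [abs_mul, abs_mul]
        _ ≤ (dot v v + ε) * (|v 0| + |v 1|) + ε * (|v 0| + |v 1|) := by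
            apply add_le_add
            · exact mul_le_mul hub hvi (abs_nonneg _) (by linarith)
            · exact mul_le_mul hub2 hri (abs_nonneg _) (le_of_lt hε)
    rw [abs_mul, abs_of_pos hvv] at key
    have h3 : |x i| ≤ ((dot v v + ε) * (|v 0| + |v 1|) + ε * (|v 0| + |v 1|)) / dot v v := by
      rw [le_div_iff₀ hvv]
      linarith [key]
    rw [hB]
    linarith
  have : ‖x‖ ≤ B - 1 := by
    apply pi_norm_le_iff_of_nonneg (by linarith [abs_nonneg (x 0), hcoord 0]) |>.mpr
    intro i
    rw [Real.norm_eq_abs]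
    exact hcoord i
  linarith

/-- A closed convex set with nonempty interior is regular closed. -/
lemma convex_regular {C : Set Pt} (hC : Convex ℝ C) (hcl : IsClosed C)
    {x₀ : Pt} (h₀ : x₀ ∈ interior C) : closure (interior C) = C := by
  apply subset_antisymm
  · exact (closure_minimal interior_subset hcl)
  · intro x hx
    have key : Tendsto (fun t : ℝ => t • x₀ + (1 - t) • x) (nhdsWithin 0 (Ioi 0)) (nhds x) := by
      have h1 : Continuous (fun t : ℝ => t • x₀ + (1 - t) • x) := by fun_prop
      have := h1.tendsto 0
      simp only [zero_smul, zero_add, sub_zero, one_smul] at this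
      exact this.mono_left nhdsWithin_le_nhds
    apply mem_closure_of_tendsto key
    have hlt : ∀ᶠ t in nhdsWithin (0:ℝ) (Ioi 0), t < 1 :=
      eventually_nhdsWithin_of_eventually_nhds
        (eventually_nhds_iff.mpr ⟨Iio 1, fun y hy => hy, isOpen_Iio, by norm_num⟩)
    filter_upwards [self_mem_nhdsWithin, hlt] with t ht ht1
    have ht' : (0:ℝ) < t := ht
    exact hC.combo_interior_closure_mem_interior h₀ (subset_closure hx) ht' (by linarith) (by ring)

lemma Rect_regular {v : Pt} (hv : v ≠ 0) {ε : ℝ} (hε : 0 < ε) :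
    closure (interior (Rect v ε)) = Rect v ε :=
  convex_regular (Rect_convex v ε) (Rect_closed v ε)
    (interior_maximal (ORect_subset v ε) (ORect_open v ε) (zero_mem_ORect v hε))

/-- every point of Rect that is not in ORect is on one of four lines -/
lemma Rect_diff {v : Pt} {ε : ℝ} {x : Pt} (hx : x ∈ Rect v ε) (hx' : x ∉ ORect v ε) :
    dot (rot v) x = ε ∨ dot (rot v) x = -ε ∨ dot v x = dot v v + ε ∨ dot v x = -ε := by
  rw [mem_Rect_iff] at hx
  rw [mem_ORect_iff] at hx'
  push_neg at hx'
  obtain ⟨a1, a2, a3, a4⟩ := hx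
  by_cases h1 : dot (rot v) x = ε
  · exact Or.inl h1
  by_cases h2 : dot (rot v) x = -ε
  · exact Or.inr (Or.inl h2)
  have l1 : dot (rot v) x < ε := lt_of_le_of_ne a1 h1
  have l2 : -(dot (rot v) x) < ε := by
    rcases lt_or_eq_of_le a2 with h | h
    · exact h
    · exact absurd (by linarith : dot (rot v) x = -ε) h2
  by_cases h3 : dot v x = dot v v + ε
  · exact Or.inr (Or.inr (Or.inl h3))
  have l3 : dot v x < dot v v + ε := lt_of_le_of_ne a3 h3
  have := hx' l1 l2 l3
  right; right; right; linarith

/-- dense complement of a line -/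
lemma dense_dot_ne {v : Pt} (hv : v ≠ 0) (c : ℝ) : Dense {x : Pt | dot v x ≠ c} := by
  intro x
  by_cases hx : dot v x ≠ c
  · exact subset_closure hx
  · push_neg at hx
    have key : Tendsto (fun t : ℝ => x + t • v) (nhdsWithin 0 (Ioi 0)) (nhds x) := by
      have h1 : Continuous (fun t : ℝ => x + t • v) := by fun_prop
      have := h1.tendsto 0
      simp only [zero_smul, add_zero] at this
      exact this.mono_left nhdsWithin_le_nhds
    apply mem_closure_of_tendsto key
    filter_upwards [self_mem_nhdsWithin] with t ht
    have ht' : (0:ℝ) < t := ht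
    have hval : dot v (x + t • v) = c + t * dot v v := by
      rw [hx.symm] at *
      simp [dot]; ring
    simp only [mem_setOf_eq, hval]
    have := dot_self_pos hv
    intro habs
    nlinarith

lemma open_dot_ne (v : Pt) (c : ℝ) : IsOpen {x : Pt | dot v x ≠ c} := by
  have : {x : Pt | dot v x ≠ c} = (fun x => dot v x) ⁻¹' {c}ᶜ := rfl
  rw [this]
  exact (isOpen_compl_singleton).preimage (continuous_dot v)

/-- Finite intersections of dense open sets are dense. -/
lemma dense_biInter {ι : Type*} (s : Finset ι) (f : ι → Set Pt)
    (h : ∀ i ∈ s, IsOpen (f i) ∧ Dense (f i)) :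
    Dense (⋂ i ∈ s, f i) := by
  classical
  induction s using Finset.induction_on with
  | empty => simp [dense_univ]
  | @insert a s' hnot ih =>
    rw [Finset.set_biInter_insert]
    exact (h a (Finset.mem_insert_self a s')).2.inter_of_isOpen_left
      (ih (fun i hi => h i (Finset.mem_insert_of_mem hi))) (h a (Finset.mem_insert_self a s')).1

/-- the four generic lines of a rectangle, avoided -/
def RectGood (v : Pt) (ε : ℝ) : Set Pt :=
  {x | dot (rot v) x ≠ ε} ∩ {x | dot (rot v) x ≠ -ε} ∩
    {x | dot v x ≠ dot v v + ε} ∩ {x | dot v x ≠ -ε}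

lemma RectGood_open_dense {v : Pt} (hv : v ≠ 0) (ε : ℝ) :
    IsOpen (RectGood v ε) ∧ Dense (RectGood v ε) := by
  have hrot := rot_ne_zero hv
  constructor
  · exact (((open_dot_ne _ _).inter (open_dot_ne _ _)).inter (open_dot_ne _ _)).inter
      (open_dot_ne _ _)
  · refine Dense.inter_of_isOpen_left ?_ (dense_dot_ne hv _) ?_
    · refine Dense.inter_of_isOpen_left ?_ (dense_dot_ne hv _) ?_
      · exact Dense.inter_of_isOpen_left (dense_dot_ne hrot _) (dense_dot_ne hrot _)
          (open_dot_ne _ _)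
      · exact (open_dot_ne _ _).inter (open_dot_ne _ _)
    · exact ((open_dot_ne _ _).inter (open_dot_ne _ _)).inter (open_dot_ne _ _)

lemma mem_ORect_of_good {v : Pt} {ε : ℝ} {x : Pt} (hx : x ∈ Rect v ε)
    (hg : x ∈ RectGood v ε) : x ∈ ORect v ε := by
  by_contra h
  obtain ⟨⟨⟨g1, g2⟩, g3⟩, g4⟩ := hg
  rcases Rect_diff hx h with h' | h' | h' | h'
  · exact g1 h'
  · exact g2 h'
  · exact g3 h'
  · exact g4 h'

/-- positive lower bound for finitely many positive reals -/
lemma finset_pos_lb {ι : Type*} (s : Finset ι) (f : ι → ℝ) (h : ∀ i ∈ s, 0 < f i) :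
    ∃ ε : ℝ, 0 < ε ∧ ∀ i ∈ s, ε < f i := by
  classical
  induction s using Finset.induction_on with
  | empty => exact ⟨1, by norm_num, by simp⟩
  | @insert a s' hnot ih =>
    obtain ⟨ε, hε, hεlt⟩ := ih (fun i hi => h i (Finset.mem_insert_of_mem hi))
    have hfa := h a (Finset.mem_insert_self a s')
    refine ⟨min ε (f a / 2), by positivity, ?_⟩
    intro i hi
    rcases Finset.mem_insert.mp hi with rfl | hi'
    · exact lt_of_le_of_lt (min_le_right _ _) (by linarith)
    · exact lt_of_le_of_lt (min_le_left _ _) (hεlt i hi')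

/-- upper bound for finitely many reals -/
lemma finset_ub {ι : Type*} (s : Finset ι) (f : ι → ℝ) :
    ∃ M : ℝ, 0 < M ∧ ∀ i ∈ s, f i ≤ M := by
  classical
  induction s using Finset.induction_on with
  | empty => exact ⟨1, by norm_num, by simp⟩
  | @insert a s' hnot ih =>
    obtain ⟨M, hM, hMle⟩ := ih
    refine ⟨max M (f a), lt_of_lt_of_le hM (le_max_left _ _), ?_⟩
    intro i hi
    rcases Finset.mem_insert.mp hi with rfl | hi'
    · exact le_max_right _ _
    · exact le_trans (hMle i hi') (le_max_left _ _)

lemma rank_fact : (1 : Cardinal) < Module.rank ℝ Pt := by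
  rw [rank_fin_fun]
  exact_mod_cast one_lt_two

/-- complement of a bounded star-shaped (at 0) set is preconnected -/
lemma star_compl {A : Set Pt} {M : ℝ} (hM : 0 < M)
    (hbdd : ∀ x ∈ A, ‖x‖ < M)
    (hstar : ∀ y ∈ A, ∀ s : ℝ, 0 ≤ s → s ≤ 1 → s • y ∈ A)
    (h0 : (0:Pt) ∈ A) :
    IsPreconnected Aᶜ ∧ Aᶜ.Nonempty ∧ ∀ x : Pt, M ≤ ‖x‖ → x ∈ Aᶜ := by
  have hout : ∀ x : Pt, M ≤ ‖x‖ → x ∈ Aᶜ := fun x hx hxA => absurd (hbdd x hxA) (not_lt.mpr hx)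
  set zb : Pt := fun _ => M + 1 with hzb
  have hzbnorm : ‖zb‖ = M + 1 := by
    have hub : ‖zb‖ ≤ M + 1 := by
      have this2 : ‖(fun _ : Fin 2 => (M+1:ℝ))‖ ≤ ‖(M+1:ℝ)‖ := pi_norm_const_le (M + 1 : ℝ)
      calc ‖zb‖ ≤ ‖(M+1 : ℝ)‖ := this2
        _ = M + 1 := by rw [Real.norm_eq_abs, abs_of_pos (by linarith)]
    have hlb : M + 1 ≤ ‖zb‖ := by
      have h2 := norm_le_pi_norm zb 0
      have h1 : ‖zb 0‖ = M + 1 := by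
        simp [hzb, Real.norm_eq_abs, abs_of_pos (by linarith : (0:ℝ) < M + 1)]
      linarith
    linarith
  have hzbA : zb ∈ Aᶜ := hout zb (by linarith)
  have ray_preconn : ∀ z : Pt, IsPreconnected ((fun s : ℝ => s • z) '' Ici 1) := by
    intro z
    exact (isPreconnected_Ici).image _ (Continuous.continuousOn (by fun_prop))
  have ray_sub : ∀ z ∈ Aᶜ, ((fun s : ℝ => s • z) '' Ici 1) ⊆ Aᶜ := by
    rintro z hz _ ⟨s, hs, rfl⟩ hmem
    apply hz
    have hs1 : (1:ℝ) ≤ s := hs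
    have hspos : (0:ℝ) < s := by linarith
    have : (s⁻¹ : ℝ) • (s • z) ∈ A := by
      apply hstar _ hmem
      · positivity
      · rw [inv_le_one_iff₀]; right; exact hs1
    rwa [smul_smul, inv_mul_cancel₀ (ne_of_gt hspos), one_smul] at this
  have znorm_pos : ∀ z ∈ Aᶜ, 0 < ‖z‖ := by
    intro z hz
    rcases eq_or_ne z 0 with rfl | hne
    · exact absurd h0 hz
    · exact norm_pos_iff.mpr hne
  have ray_mem : ∀ z : Pt, z ∈ ((fun s : ℝ => s • z) '' Ici 1) :=
    fun z => ⟨1, mem_Ici.mpr le_rfl, one_smul ℝ z⟩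
  have ray_sphere : ∀ z ∈ Aᶜ, ∀ R : ℝ, ‖z‖ ≤ R →
      ((R / ‖z‖) • z) ∈ ((fun s : ℝ => s • z) '' Ici 1) ∩ sphere (0:Pt) R := by
    intro z hz R hR
    have hzpos := znorm_pos z hz
    have hRpos : 0 < R := lt_of_lt_of_le hzpos hR
    constructor
    · exact ⟨R / ‖z‖, mem_Ici.mpr ((one_le_div hzpos).mpr hR), rfl⟩
    · rw [mem_sphere_iff_norm, sub_zero, norm_smul, Real.norm_eq_abs,
        abs_of_pos (div_pos hRpos hzpos), div_mul_cancel₀]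
      exact ne_of_gt hzpos
  have sphere_sub : ∀ R : ℝ, M ≤ R → sphere (0:Pt) R ⊆ Aᶜ := by
    intro R hRM x hx
    rw [mem_sphere_iff_norm, sub_zero] at hx
    exact hout x (hx ▸ hRM)
  refine ⟨?_, ⟨zb, hzbA⟩, hout⟩
  have key : Aᶜ = ⋃₀ {S | ∃ z ∈ Aᶜ, S = ((fun s : ℝ => s • z) '' Ici 1) ∪
      sphere (0:Pt) (max ‖z‖ (M + 1)) ∪ ((fun s : ℝ => s • zb) '' Ici 1)} := by
    apply subset_antisymm
    · intro z hz
      exact ⟨_, ⟨z, hz, rfl⟩, Or.inl (Or.inl (ray_mem z))⟩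
    · rintro x ⟨S, ⟨z, hz, rfl⟩, hx⟩
      rcases hx with (h | h) | h
      · exact ray_sub z hz h
      · exact sphere_sub _ (le_trans (by linarith) (le_max_right _ _)) h
      · exact ray_sub zb hzbA h
  rw [key]
  apply isPreconnected_sUnion zb
  · rintro S ⟨z, hz, rfl⟩
    exact Or.inr (ray_mem zb)
  · rintro S ⟨z, hz, rfl⟩
    set R := max ‖z‖ (M + 1) with hR
    have h1 : IsPreconnected (((fun s : ℝ => s • z) '' Ici 1) ∪ sphere (0:Pt) R) := by
      apply IsPreconnected.union ((R / ‖z‖) • z)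
      · exact (ray_sphere z hz R (le_max_left _ _)).1
      · exact (ray_sphere z hz R (le_max_left _ _)).2
      · exact ray_preconn z
      · exact isPreconnected_sphere rank_fact 0 R
    apply IsPreconnected.union ((R / ‖zb‖) • zb)
    · exact Or.inr (ray_sphere zb hzbA R (hzbnorm ▸ le_max_right _ _)).2
    · exact (ray_sphere zb hzbA R (hzbnorm ▸ le_max_right _ _)).1
    · exact h1
    · exact ray_preconn zb

/-- Master lemma: if `r` is regular closed, `K` closed, and `rᶜ ∪ Kᶜ` is preconnected and
nonempty, then the complement of `closure (interior (r ∩ K))` is connected. -/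
lemma master {r K : Set Pt} (hreg : closure (interior r) = r) (hK : IsClosed K)
    (hW : IsPreconnected (rᶜ ∪ Kᶜ)) (hWne : (rᶜ ∪ Kᶜ).Nonempty) :
    IsConnected (closure (interior (r ∩ K)))ᶜ := by
  set r₁ := closure (interior (r ∩ K)) with hr₁
  have hrcl : IsClosed r := hreg ▸ isClosed_closure
  have hsub : r₁ ⊆ r ∩ K :=
    closure_minimal (interior_subset.trans subset_rfl) (hrcl.inter hK) |>.trans subset_rfl
  have hWsub : rᶜ ∪ Kᶜ ⊆ r₁ᶜ := by
    intro x hx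
    intro hxr₁
    rcases hx with hx | hx
    · exact hx (hsub hxr₁).1
    · exact hx (hsub hxr₁).2
  have hopen : IsOpen r₁ᶜ := isClosed_closure.isOpen_compl
  have key : ∀ x ∈ r₁ᶜ, ∃ S : Set Pt, IsPreconnected S ∧ x ∈ S ∧ S ⊆ r₁ᶜ ∧
      (S ∩ (rᶜ ∪ Kᶜ)).Nonempty := by
    intro x hx
    by_cases hxr : x ∈ r
    · obtain ⟨δ, hδ, hball⟩ := Metric.isOpen_iff.mp hopen x hx
      have hBK : (ball x δ ∩ Kᶜ).Nonempty := by
        by_contra hem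
        rw [Set.not_nonempty_iff_eq_empty, ← Set.disjoint_iff_inter_eq_empty] at hem
        have hem := Set.disjoint_left.mp hem
        have hBsubK : ball x δ ⊆ K := by
          intro y hy
          by_contra hyK
          exact hem hy hyK
        apply hx
        rw [hr₁, _root_.mem_closure_iff]
        intro o ho hxo
        have hxo' : x ∈ o ∩ ball x δ := ⟨hxo, mem_ball_self hδ⟩
        have ho' : IsOpen (o ∩ ball x δ) := ho.inter isOpen_ball
        have hxr' : x ∈ closure (interior r) := hreg.symm ▸ hxr
        rw [_root_.mem_closure_iff] at hxr'
        obtain ⟨z, hz1, hz2⟩ := hxr' _ ho' hxo'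
        refine ⟨z, hz1.1, ?_⟩
        have : interior r ∩ ball x δ ⊆ interior (r ∩ K) := by
          apply interior_maximal
          · exact fun w hw => ⟨interior_subset hw.1, hBsubK hw.2⟩
          · exact isOpen_interior.inter isOpen_ball
        exact this ⟨hz2, hz1.2⟩
      obtain ⟨y, hy⟩ := hBK
      exact ⟨ball x δ, (convex_ball x δ).isPreconnected, mem_ball_self hδ, hball,
        ⟨y, hy.1, Or.inr hy.2⟩⟩
    · exact ⟨{x}, isPreconnected_singleton, rfl, singleton_subset_iff.mpr hx,
        ⟨x, rfl, Or.inl hxr⟩⟩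
  obtain ⟨w₀, hw₀⟩ := hWne
  constructor
  · exact ⟨w₀, hWsub hw₀⟩
  · have hdecomp : r₁ᶜ = ⋃₀ {S | ∃ x ∈ r₁ᶜ, ∃ S₀ : Set Pt, S = S₀ ∪ (rᶜ ∪ Kᶜ) ∧
        IsPreconnected S₀ ∧ x ∈ S₀ ∧ S₀ ⊆ r₁ᶜ ∧ (S₀ ∩ (rᶜ ∪ Kᶜ)).Nonempty} := by
      apply subset_antisymm
      · intro x hx
        obtain ⟨S, h1, h2, h3, h4⟩ := key x hx
        exact ⟨S ∪ (rᶜ ∪ Kᶜ), ⟨x, hx, S, rfl, h1, h2, h3, h4⟩, Or.inl h2⟩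
      · intro x hx
        obtain ⟨S, ⟨y, hy, S₀, rfl, h1, h2, h3, h4⟩, hxS⟩ := hx
        rcases hxS with h | h
        · exact h3 h
        · exact hWsub h
    rw [hdecomp]
    apply isPreconnected_sUnion w₀
    · rintro S ⟨x, hx, S₀, rfl, h1, h2, h3, h4⟩
      exact Or.inr hw₀
    · rintro S ⟨x, hx, S₀, rfl, h1, h2, h3, h4⟩
      obtain ⟨z, hz1, hz2⟩ := h4
      exact IsPreconnected.union z hz1 hz2 h1 hW

/-- chaining three preconnected sets -/
lemma chain3 {S1 S2 S3 : Set Pt} (h1 : IsPreconnected S1) (h2 : IsPreconnected S2)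
    (h3 : IsPreconnected S3) (h12 : (S1 ∩ S2).Nonempty) (h23 : (S2 ∩ S3).Nonempty) :
    IsPreconnected (S1 ∪ S2 ∪ S3) := by
  obtain ⟨x, hx⟩ := h12
  obtain ⟨y, hy⟩ := h23
  have hu : IsPreconnected (S1 ∪ S2) := IsPreconnected.union x hx.1 hx.2 h1 h2
  exact IsPreconnected.union y (Or.inr hy.1) hy.2 hu h3

/-- anchored preconnectedness -/
lemma anchored {W : Set Pt} (a : Pt) (ha : a ∈ W)
    (h : ∀ w ∈ W, ∃ S : Set Pt, IsPreconnected S ∧ S ⊆ W ∧ w ∈ S ∧ a ∈ S) :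
    IsPreconnected W := by
  have hdecomp : W = ⋃₀ {S | IsPreconnected S ∧ S ⊆ W ∧ a ∈ S} := by
    apply subset_antisymm
    · intro w hw
      obtain ⟨S, h1, h2, h3, h4⟩ := h w hw
      exact ⟨S, ⟨h1, h2, h4⟩, h3⟩
    · intro w hw
      obtain ⟨S, ⟨h1, h2, h3⟩, hwS⟩ := hw
      exact h2 hwS
  rw [hdecomp]
  exact isPreconnected_sUnion a _ (fun S hS => hS.2.2) (fun S hS => hS.1)

end PolygonAux

open PolygonAux

/-- Membership in the Boolean subalgebra of `RC(ℝ²)` generated by closed half-planes: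
regular closed polygons. -/
inductive IsPolygon : Set (Fin 2 → ℝ) → Prop
  | halfplane (a : Fin 2 → ℝ) (c : ℝ) (ha : a ≠ 0) :
      IsPolygon {x | ∑ i, a i * x i ≤ c}
  | sup (X Y : Set (Fin 2 → ℝ)) : IsPolygon X → IsPolygon Y → IsPolygon (X ∪ Y)
  | inf (X Y : Set (Fin 2 → ℝ)) : IsPolygon X → IsPolygon Y →
      IsPolygon (closure (interior (X ∩ Y)))
  | compl (X : Set (Fin 2 → ℝ)) : IsPolygon X → IsPolygon (closure Xᶜ)

namespace PolygonAux

lemma HP_polygon {w : Pt} (hw : w ≠ 0) (c : ℝ) : IsPolygon (HP w c) := by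
  have : HP w c = {x : Pt | ∑ i, w i * x i ≤ c} := by
    ext x; simp only [HP, mem_setOf_eq, sum_eq_dot]
  rw [this]
  exact IsPolygon.halfplane w c hw

/-- helper for building polygons by intersection -/
lemma polygon_inter {A B : Set Pt} (hA : IsPolygon A) (hB : IsPolygon B)
    (hconv : Convex ℝ (A ∩ B)) (hclo : IsClosed (A ∩ B))
    {U : Set Pt} (hU : IsOpen U) (hUsub : U ⊆ A ∩ B) {x₀ : Pt} (hx₀ : x₀ ∈ U) :
    IsPolygon (A ∩ B) := by
  have h1 : closure (interior (A ∩ B)) = A ∩ B :=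
    convex_regular hconv hclo (interior_maximal hUsub hU hx₀)
  rw [← h1]
  exact IsPolygon.inf A B hA hB

lemma Rect_polygon {v : Pt} (hv : v ≠ 0) {ε : ℝ} (hε : 0 < ε) : IsPolygon (Rect v ε) := by
  have hrot := rot_ne_zero hv
  have hO := ORect_open v ε
  have h0 := zero_mem_ORect v hε
  have hs1 : IsPolygon (HP (rot v) ε ∩ HP (-(rot v)) ε) := by
    apply polygon_inter (HP_polygon hrot ε) (HP_polygon (neg_ne_zero' hrot) ε)
      ((HP_convex _ _).inter (HP_convex _ _)) ((HP_closed _ _).inter (HP_closed _ _))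
      (U := {x | dot (rot v) x < ε} ∩ {x | dot (-(rot v)) x < ε})
      ((isOpen_lt (continuous_dot _) continuous_const).inter
        (isOpen_lt (continuous_dot _) continuous_const))
      (fun x hx => ⟨mem_HP (le_of_lt hx.1), mem_HP (le_of_lt hx.2)⟩)
      (x₀ := 0)
    exact ⟨h0.1.1.1, h0.1.1.2⟩
  have hs2 : IsPolygon (HP (rot v) ε ∩ HP (-(rot v)) ε ∩ HP v (dot v v + ε)) := by
    apply polygon_inter hs1 (HP_polygon hv _)
      (((HP_convex _ _).inter (HP_convex _ _)).inter (HP_convex _ _))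
      (((HP_closed _ _).inter (HP_closed _ _)).inter (HP_closed _ _))
      (U := {x | dot (rot v) x < ε} ∩ {x | dot (-(rot v)) x < ε} ∩ {x | dot v x < dot v v + ε})
      (((isOpen_lt (continuous_dot _) continuous_const).inter
        (isOpen_lt (continuous_dot _) continuous_const)).inter
        (isOpen_lt (continuous_dot _) continuous_const))
      (fun x hx => ⟨⟨mem_HP (le_of_lt hx.1.1), mem_HP (le_of_lt hx.1.2)⟩, mem_HP (le_of_lt hx.2)⟩)
      (x₀ := 0)
    exact ⟨⟨h0.1.1.1, h0.1.1.2⟩, h0.1.2⟩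
  apply polygon_inter hs2 (HP_polygon (neg_ne_zero' hv) ε)
    (Rect_convex v ε) (Rect_closed v ε)
    (U := ORect v ε) hO (ORect_subset v ε) (x₀ := 0) h0

/-- finite unions of polygons over a nonempty finset are polygons -/
lemma polygon_biUnion {ι : Type*} (s : Finset ι) (hs : s.Nonempty) (f : ι → Set Pt)
    (hf : ∀ i ∈ s, IsPolygon (f i)) : IsPolygon (⋃ i ∈ s, f i) := by
  classical
  induction hs using Finset.Nonempty.cons_induction with
  | singleton i => simpa using hf i (by simp)
  | cons i s' hi hs' ih =>
    rw [Finset.cons_eq_insert, Finset.set_biUnion_insert]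
    exact IsPolygon.sup _ _ (hf i (Finset.mem_cons_self i s'))
      (ih (fun j hj => hf j (Finset.mem_cons_of_mem hj)))

/-- A finite family of open convex sets inside `U` whose union is dense in `U`. -/
def Fam (U : Set Pt) : Prop :=
  ∃ 𝒞 : Finset (Set Pt), (∀ C ∈ 𝒞, IsOpen C ∧ Convex ℝ C ∧ C ⊆ U) ∧
    U ⊆ closure (⋃₀ (𝒞 : Set (Set Pt)))

theorem structural {r : Set Pt} (h : IsPolygon r) :
    IsClosed r ∧ closure (interior r) = r ∧ Fam rᶜ ∧ Fam (interior r) := by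
  classical
  induction h with
  | halfplane a c ha =>
    have hcont := continuous_dot a
    have hEq : {x : Pt | ∑ i, a i * x i ≤ c} = {x : Pt | dot a x ≤ c} := by
      ext x; simp only [mem_setOf_eq, Fin.sum_univ_two, dot]
    rw [hEq]
    have hcl : IsClosed {x : Pt | dot a x ≤ c} := isClosed_le hcont continuous_const
    have hlt_open : IsOpen {x : Pt | dot a x < c} := isOpen_lt hcont continuous_const
    have hgt_open : IsOpen {x : Pt | c < dot a x} := isOpen_lt continuous_const hcont
    have hltsub : {x : Pt | dot a x < c} ⊆ {x : Pt | dot a x ≤ c} :=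
      Set.setOf_subset_setOf.mpr (fun x => le_of_lt)
    have hclsub : {x : Pt | dot a x ≤ c} ⊆ closure {x : Pt | dot a x < c} := by
      obtain ⟨j, hj⟩ : ∃ j, a j ≠ 0 := by
        by_contra hcon
        push_neg at hcon
        exact ha (funext fun i => hcon i)
      intro x hx
      have hx' : dot a x ≤ c := hx
      have hj01 : j = 0 ∨ j = 1 := by fin_cases j <;> simp
      have hvex : ∃ v : Pt, dot a v = 1 := by
        rcases hj01 with rfl | rfl
        · exact ⟨fun i => if i = 0 then (a 0)⁻¹ else 0, by simp [dot]; field_simp⟩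
        · exact ⟨fun i => if i = 1 then (a 1)⁻¹ else 0, by simp [dot]; field_simp⟩
      obtain ⟨v, hav⟩ := hvex
      have key : Tendsto (fun t : ℝ => x - t • v) (nhdsWithin 0 (Ioi 0)) (nhds x) := by
        have h1 : Continuous (fun t : ℝ => x - t • v) := by fun_prop
        have := h1.tendsto 0
        simp only [zero_smul, sub_zero] at this
        exact this.mono_left nhdsWithin_le_nhds
      apply mem_closure_of_tendsto key
      filter_upwards [self_mem_nhdsWithin] with t ht
      have ht' : (0:ℝ) < t := ht
      have hd : dot a (x - t • v) = dot a x - t * dot a v := by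
        simp [dot]; ring
      simp only [mem_setOf_eq, hd, hav]
      linarith
    refine ⟨hcl, ?_, ?_, ?_⟩
    · apply subset_antisymm
      · exact closure_minimal interior_subset hcl
      · exact fun x hx => closure_mono (interior_maximal hltsub hlt_open) (hclsub hx)
    · refine ⟨{{x : Pt | c < dot a x}}, ?_, ?_⟩
      · intro C hC
        rw [Finset.mem_singleton] at hC
        subst hC
        refine ⟨hgt_open, convex_halfSpace_gt (isLinearMap_dot a) c, ?_⟩
        intro x hx
        simp only [mem_compl_iff, mem_setOf_eq, not_le]
        exact hx
      · intro x hx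
        have : x ∈ {x : Pt | c < dot a x} := by
          simp only [mem_compl_iff, mem_setOf_eq, not_le] at hx
          exact hx
        apply subset_closure
        simpa using this
    · refine ⟨{{x : Pt | dot a x < c}}, ?_, ?_⟩
      · intro C hC
        rw [Finset.mem_singleton] at hC
        subst hC
        exact ⟨hlt_open, convex_halfSpace_lt (isLinearMap_dot a) c,
          interior_maximal hltsub hlt_open⟩
      · intro x hx
        have := hclsub (interior_subset hx)
        simpa using this
  | sup X Y hX hY ihX ihY =>
    obtain ⟨hXcl, hXreg, ⟨𝒞X, h𝒞X, hdX⟩, ⟨𝒞X', h𝒞X', hdX'⟩⟩ := ihX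
    obtain ⟨hYcl, hYreg, ⟨𝒞Y, h𝒞Y, hdY⟩, ⟨𝒞Y', h𝒞Y', hdY'⟩⟩ := ihY
    refine ⟨hXcl.union hYcl, ?_, ?_, ?_⟩
    · apply subset_antisymm
      · exact closure_minimal interior_subset (hXcl.union hYcl)
      · have h1 : X ∪ Y ⊆ closure (interior X) ∪ closure (interior Y) := by
          rw [hXreg, hYreg]
        intro x hx
        rcases h1 hx with h | h
        · exact closure_mono (interior_mono subset_union_left) h
        · exact closure_mono (interior_mono subset_union_right) h
    · refine ⟨(𝒞X ×ˢ 𝒞Y).image (fun p => p.1 ∩ p.2), ?_, ?_⟩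
      · intro C hC
        rw [Finset.mem_image] at hC
        obtain ⟨⟨C1, C2⟩, hmem, rfl⟩ := hC
        rw [Finset.mem_product] at hmem
        obtain ⟨h1, h2, h3⟩ := h𝒞X C1 hmem.1
        obtain ⟨h4, h5, h6⟩ := h𝒞Y C2 hmem.2
        refine ⟨h1.inter h4, h2.inter h5, ?_⟩
        rw [Set.compl_union]
        exact fun x hx => ⟨h3 hx.1, h6 hx.2⟩
      · intro x hx
        rw [_root_.mem_closure_iff]
        intro o ho hxo
        rw [Set.compl_union] at hx
        have ho1 : IsOpen (o ∩ Xᶜ ∩ Yᶜ) := (ho.inter hXcl.isOpen_compl).inter hYcl.isOpen_compl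
        have hxo1 : x ∈ o ∩ Xᶜ ∩ Yᶜ := ⟨⟨hxo, hx.1⟩, hx.2⟩
        have h1 : ((o ∩ Xᶜ ∩ Yᶜ) ∩ ⋃₀ (𝒞X : Set (Set Pt))).Nonempty := by
          have := hdX hxo1.1.2
          rw [_root_.mem_closure_iff] at this
          exact this _ ho1 hxo1
        obtain ⟨z, hz1, C1, hC1, hzC1⟩ := h1
        have ho2 : IsOpen (o ∩ Xᶜ ∩ Yᶜ ∩ C1) := ho1.inter (h𝒞X C1 hC1).1
        have h2 : ((o ∩ Xᶜ ∩ Yᶜ ∩ C1) ∩ ⋃₀ (𝒞Y : Set (Set Pt))).Nonempty := by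
          have := hdY hz1.2
          rw [_root_.mem_closure_iff] at this
          exact this _ ho2 ⟨hz1, hzC1⟩
        obtain ⟨w, hw1, C2, hC2, hwC2⟩ := h2
        refine ⟨w, hw1.1.1.1, ?_⟩
        refine ⟨C1 ∩ C2, ?_, hw1.2, hwC2⟩
        rw [Finset.coe_image]
        exact ⟨(C1, C2), by rw [Finset.mem_coe, Finset.mem_product]; exact ⟨hC1, hC2⟩, rfl⟩
    · refine ⟨𝒞X' ∪ 𝒞Y', ?_, ?_⟩
      · intro C hC
        rcases Finset.mem_union.mp hC with h | h
        · obtain ⟨h1, h2, h3⟩ := h𝒞X' C h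
          exact ⟨h1, h2, h3.trans (interior_mono subset_union_left)⟩
        · obtain ⟨h1, h2, h3⟩ := h𝒞Y' C h
          exact ⟨h1, h2, h3.trans (interior_mono subset_union_right)⟩
      · intro x hx
        rw [_root_.mem_closure_iff]
        intro o ho hxo
        have ho1 : IsOpen (o ∩ interior (X ∪ Y)) := ho.inter isOpen_interior
        have hxo1 : x ∈ o ∩ interior (X ∪ Y) := ⟨hxo, hx⟩
        have key : ((o ∩ interior (X ∪ Y)) ∩ (interior X ∪ interior Y)).Nonempty := by
          by_cases hc : (o ∩ interior (X ∪ Y)) ∩ Xᶜ = ∅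
          · have hsubX : o ∩ interior (X ∪ Y) ⊆ X := by
              intro y hy
              by_contra hyX
              rw [Set.eq_empty_iff_forall_notMem] at hc
              exact hc y ⟨hy, hyX⟩
            have : o ∩ interior (X ∪ Y) ⊆ interior X := interior_maximal hsubX ho1
            exact ⟨x, hxo1, Or.inl (this hxo1)⟩
          · have hc' := Set.nonempty_iff_ne_empty.mpr hc
            obtain ⟨z, hz1, hz2⟩ := hc'
            have hz3 : z ∈ X ∪ Y := interior_subset hz1.2
            have hzY : z ∈ Y := by
              rcases hz3 with h | h
              · exact absurd h hz2
              · exact h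
            have hoz : IsOpen (o ∩ interior (X ∪ Y) ∩ Xᶜ) := ho1.inter hXcl.isOpen_compl
            have hsubY : o ∩ interior (X ∪ Y) ∩ Xᶜ ⊆ Y := by
              intro y hy
              rcases interior_subset hy.1.2 with h | h
              · exact absurd h hy.2
              · exact h
            have : o ∩ interior (X ∪ Y) ∩ Xᶜ ⊆ interior Y := interior_maximal hsubY hoz
            exact ⟨z, ⟨hz1, Or.inr (this ⟨hz1, hz2⟩)⟩⟩
        obtain ⟨z, hz1, hz2⟩ := key
        rcases hz2 with h | h
        · have ho2 : IsOpen (o ∩ interior (X ∪ Y) ∩ interior X) := ho1.inter isOpen_interior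
          have := hdX' h
          rw [_root_.mem_closure_iff] at this
          obtain ⟨w, hw1, C, hC, hwC⟩ := this _ ho2 ⟨hz1, h⟩
          exact ⟨w, hw1.1.1, C, by rw [Finset.coe_union]; exact Or.inl hC, hwC⟩
        · have ho2 : IsOpen (o ∩ interior (X ∪ Y) ∩ interior Y) := ho1.inter isOpen_interior
          have := hdY' h
          rw [_root_.mem_closure_iff] at this
          obtain ⟨w, hw1, C, hC, hwC⟩ := this _ ho2 ⟨hz1, h⟩
          exact ⟨w, hw1.1.1, C, by rw [Finset.coe_union]; exact Or.inr hC, hwC⟩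
  | inf X Y hX hY ihX ihY =>
    obtain ⟨hXcl, hXreg, ⟨𝒞X, h𝒞X, hdX⟩, ⟨𝒞X', h𝒞X', hdX'⟩⟩ := ihX
    obtain ⟨hYcl, hYreg, ⟨𝒞Y, h𝒞Y, hdY⟩, ⟨𝒞Y', h𝒞Y', hdY'⟩⟩ := ihY
    set rr := closure (interior (X ∩ Y)) with hrr
    have hrrcl : IsClosed rr := isClosed_closure
    have hrsubX : rr ⊆ X := closure_minimal (interior_subset.trans (fun z hz => hz.1)) hXcl
    have hrsubY : rr ⊆ Y := closure_minimal (interior_subset.trans (fun z hz => hz.2)) hYcl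
    refine ⟨hrrcl, ?_, ?_, ?_⟩
    · apply subset_antisymm
      · exact closure_minimal interior_subset hrrcl
      · rw [hrr]
        intro x hx
        exact closure_mono (interior_maximal subset_closure isOpen_interior) hx
    · refine ⟨𝒞X ∪ 𝒞Y, ?_, ?_⟩
      · intro C hC
        rcases Finset.mem_union.mp hC with h | h
        · obtain ⟨h1, h2, h3⟩ := h𝒞X C h
          exact ⟨h1, h2, h3.trans (Set.compl_subset_compl.mpr hrsubX)⟩
        · obtain ⟨h1, h2, h3⟩ := h𝒞Y C h
          exact ⟨h1, h2, h3.trans (Set.compl_subset_compl.mpr hrsubY)⟩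
      · intro x hx
        rw [_root_.mem_closure_iff]
        intro o ho hxo
        have ho1 : IsOpen (o ∩ rrᶜ) := ho.inter hrrcl.isOpen_compl
        have hxo1 : x ∈ o ∩ rrᶜ := ⟨hxo, hx⟩
        have key : ((o ∩ rrᶜ) ∩ (Xᶜ ∪ Yᶜ)).Nonempty := by
          by_contra hem
          rw [Set.not_nonempty_iff_eq_empty] at hem
          have hsub : o ∩ rrᶜ ⊆ X ∩ Y := by
            intro y hy
            constructor
            · by_contra hyX
              rw [Set.eq_empty_iff_forall_notMem] at hem
              exact hem y ⟨hy, Or.inl hyX⟩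
            · by_contra hyY
              rw [Set.eq_empty_iff_forall_notMem] at hem
              exact hem y ⟨hy, Or.inr hyY⟩
          have : o ∩ rrᶜ ⊆ interior (X ∩ Y) := interior_maximal hsub ho1
          exact hxo1.2 (subset_closure (this hxo1))
        obtain ⟨z, hz1, hz2⟩ := key
        rcases hz2 with h | h
        · have ho2 : IsOpen (o ∩ rrᶜ ∩ Xᶜ) := ho1.inter hXcl.isOpen_compl
          have := hdX h
          rw [_root_.mem_closure_iff] at this
          obtain ⟨w, hw1, C, hC, hwC⟩ := this _ ho2 ⟨hz1, h⟩
          exact ⟨w, hw1.1.1, C, by rw [Finset.coe_union]; exact Or.inl hC, hwC⟩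
        · have ho2 : IsOpen (o ∩ rrᶜ ∩ Yᶜ) := ho1.inter hYcl.isOpen_compl
          have := hdY h
          rw [_root_.mem_closure_iff] at this
          obtain ⟨w, hw1, C, hC, hwC⟩ := this _ ho2 ⟨hz1, h⟩
          exact ⟨w, hw1.1.1, C, by rw [Finset.coe_union]; exact Or.inr hC, hwC⟩
    · refine ⟨(𝒞X' ×ˢ 𝒞Y').image (fun p => p.1 ∩ p.2), ?_, ?_⟩
      · intro C hC
        rw [Finset.mem_image] at hC
        obtain ⟨⟨C1, C2⟩, hmem, rfl⟩ := hC
        rw [Finset.mem_product] at hmem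
        obtain ⟨h1, h2, h3⟩ := h𝒞X' C1 hmem.1
        obtain ⟨h4, h5, h6⟩ := h𝒞Y' C2 hmem.2
        refine ⟨h1.inter h4, h2.inter h5, ?_⟩
        have hsub : C1 ∩ C2 ⊆ interior (X ∩ Y) := by
          rw [interior_inter]
          exact fun z hz => ⟨h3 hz.1, h6 hz.2⟩
        exact interior_maximal (hsub.trans subset_closure) (h1.inter h4)
      · intro x hx
        rw [_root_.mem_closure_iff]
        intro o ho hxo
        have ho1 : IsOpen (o ∩ interior rr) := ho.inter isOpen_interior
        have hxo1 : x ∈ o ∩ interior rr := ⟨hxo, hx⟩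
        have h1 : ((o ∩ interior rr) ∩ interior (X ∩ Y)).Nonempty := by
          have hsubrr : o ∩ interior rr ⊆ rr := fun z hz => interior_subset hz.2
          have : x ∈ closure (interior (X ∩ Y)) := hsubrr hxo1
          rw [_root_.mem_closure_iff] at this
          exact this _ ho1 hxo1
        obtain ⟨z, hz1, hz2⟩ := h1
        rw [interior_inter] at hz2
        have ho2 : IsOpen (o ∩ interior rr ∩ (interior X ∩ interior Y)) :=
          ho1.inter (isOpen_interior.inter isOpen_interior)
        have := hdX' hz2.1
        rw [_root_.mem_closure_iff] at this
        obtain ⟨w, hw1, C1, hC1, hwC1⟩ := this _ ho2 ⟨hz1, hz2⟩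
        have ho3 : IsOpen (o ∩ interior rr ∩ (interior X ∩ interior Y) ∩ C1) :=
          ho2.inter (h𝒞X' C1 hC1).1
        have := hdY' hw1.2.2
        rw [_root_.mem_closure_iff] at this
        obtain ⟨u, hu1, C2, hC2, huC2⟩ := this _ ho3 ⟨hw1, hwC1⟩
        refine ⟨u, hu1.1.1.1, C1 ∩ C2, ?_, hu1.2, huC2⟩
        rw [Finset.coe_image]
        exact ⟨(C1, C2), by rw [Finset.mem_coe, Finset.mem_product]; exact ⟨hC1, hC2⟩, rfl⟩
  | compl X hX ihX =>
    obtain ⟨hXcl, hXreg, ⟨𝒞X, h𝒞X, hdX⟩, ⟨𝒞X', h𝒞X', hdX'⟩⟩ := ihX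
    have hcompl : (closure Xᶜ)ᶜ = interior X := by
      rw [closure_compl, compl_compl]
    refine ⟨isClosed_closure, ?_, ?_, ?_⟩
    · apply subset_antisymm
      · exact closure_minimal interior_subset isClosed_closure
      · intro x hx
        exact closure_mono (interior_maximal subset_closure hXcl.isOpen_compl) hx
    · rw [hcompl]
      exact ⟨𝒞X', h𝒞X', hdX'⟩
    · refine ⟨𝒞X, ?_, ?_⟩
      · intro C hC
        obtain ⟨h1, h2, h3⟩ := h𝒞X C hC
        refine ⟨h1, h2, ?_⟩
        exact interior_maximal (h3.trans subset_closure) h1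
      · intro x hx
        rw [_root_.mem_closure_iff]
        intro o ho hxo
        have ho1 : IsOpen (o ∩ interior (closure Xᶜ)) := ho.inter isOpen_interior
        have hxo1 : x ∈ o ∩ interior (closure Xᶜ) := ⟨hxo, hx⟩
        have h1 : ((o ∩ interior (closure Xᶜ)) ∩ Xᶜ).Nonempty := by
          have : x ∈ closure Xᶜ := interior_subset hx
          rw [_root_.mem_closure_iff] at this
          exact this _ ho1 hxo1
        obtain ⟨z, hz1, hz2⟩ := h1
        have ho2 : IsOpen (o ∩ interior (closure Xᶜ) ∩ Xᶜ) := ho1.inter hXcl.isOpen_compl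
        have := hdX hz2
        rw [_root_.mem_closure_iff] at this
        obtain ⟨w, hw1, C, hC, hwC⟩ := this _ ho2 ⟨hz1, hz2⟩
        exact ⟨w, hw1.1.1, C, hC, hwC⟩

end PolygonAux

/-- Every regular closed polygon in `ℝ²` is the union of two regular closed polygons,
each with connected complement. -/
theorem polygon_eq_union_of_two_with_connected_complement
    (r : Set (Fin 2 → ℝ)) (hr : IsPolygon r) :
    ∃ r₁ r₂ : Set (Fin 2 → ℝ),
      IsPolygon r₁ ∧ IsPolygon r₂ ∧ r = r₁ ∪ r₂ ∧
      IsConnected r₁ᶜ ∧ IsConnected r₂ᶜ := by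
  classical
  obtain ⟨hrcl, hreg, ⟨𝒞, h𝒞, hd⟩, -⟩ := PolygonAux.structural hr
  by_cases hne : rᶜ.Nonempty
  · -- main case : the complement is nonempty
    set 𝒟 : Finset (Set Pt) := 𝒞.filter (fun C => C.Nonempty) with h𝒟def
    have h𝒟sub : ∀ C ∈ 𝒟, IsOpen C ∧ Convex ℝ C ∧ C ⊆ rᶜ ∧ C.Nonempty := by
      intro C hC
      obtain ⟨h1, h2⟩ := Finset.mem_filter.mp hC
      obtain ⟨o1, o2, o3⟩ := h𝒞 C h1
      exact ⟨o1, o2, o3, h2⟩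
    have hrco : IsOpen rᶜ := hrcl.isOpen_compl
    have reach : ∀ x ∈ rᶜ, ∀ o : Set Pt, IsOpen o → x ∈ o →
        ∃ C ∈ 𝒟, ((o ∩ rᶜ) ∩ C).Nonempty := by
      intro x hx o ho hxo
      have h1 : x ∈ closure (⋃₀ (𝒞 : Set (Set Pt))) := hd hx
      rw [_root_.mem_closure_iff] at h1
      obtain ⟨z, hz1, C, hC, hzC⟩ := h1 (o ∩ rᶜ) (ho.inter hrco) ⟨hxo, hx⟩
      exact ⟨C, Finset.mem_filter.mpr ⟨hC, ⟨z, hzC⟩⟩, ⟨z, hz1, hzC⟩⟩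
    have h𝒟ne : 𝒟.Nonempty := by
      obtain ⟨x, hx⟩ := hne
      obtain ⟨C, hC, -⟩ := reach x hx univ isOpen_univ (mem_univ x)
      exact ⟨C, hC⟩
    -- choose nonzero points p in each family member
    have hpex : ∀ C ∈ 𝒟, ∃ pp : Pt, pp ∈ C ∧ pp ≠ 0 := by
      intro C hC
      obtain ⟨hCo, hCc, hCsub, y, hy⟩ := h𝒟sub C hC
      by_cases hy0 : y = 0
      · subst hy0
        obtain ⟨δ, hδ, hball⟩ := Metric.isOpen_iff.mp hCo 0 hy
        refine ⟨fun _ => δ/2, hball ?_, ?_⟩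
        · rw [mem_ball, dist_zero_right]
          have hub : ‖(fun _ : Fin 2 => δ/2)‖ ≤ ‖(δ/2 : ℝ)‖ := pi_norm_const_le (δ/2)
          have : ‖(δ/2 : ℝ)‖ = δ/2 := by
            rw [Real.norm_eq_abs, abs_of_pos (by linarith)]
          rw [this] at hub
          linarith
        · intro hcon
          have := congrFun hcon 0
          simp at this
          linarith
      · exact ⟨y, hy, hy0⟩
    choose p hp1 hp2 using hpex
    -- choose generic points q avoiding all the spider lines
    have hqex : ∀ C ∈ 𝒟, ∃ qq : Pt, qq ∈ C ∧
        ∀ D : {D // D ∈ 𝒟}, dot (rot (p D.1 D.2)) qq ≠ 0 := by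
      intro C hC
      obtain ⟨hCo, hCc, hCsub, hCne⟩ := h𝒟sub C hC
      have hdense : Dense (⋂ D ∈ 𝒟.attach, {x : Pt | dot (rot (p D.1 D.2)) x ≠ 0}) :=
        dense_biInter _ _ (fun D _ =>
          ⟨open_dot_ne _ 0, dense_dot_ne (rot_ne_zero (hp2 D.1 D.2)) 0⟩)
      obtain ⟨z, hz1, hz2⟩ := hdense.inter_open_nonempty C hCo hCne
      refine ⟨z, hz1, ?_⟩
      intro D
      simp only [Set.mem_iInter] at hz2
      exact hz2 D (Finset.mem_attach _ _)
    choose q hq1 hq2 using hqex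
    -- choose ε
    obtain ⟨ε, hεpos, hεlt⟩ := finset_pos_lb (𝒟.attach ×ˢ 𝒟.attach)
      (fun pr => |dot (rot (p pr.2.1 pr.2.2)) (q pr.1.1 pr.1.2)|)
      (fun pr _ => abs_pos.mpr (hq2 pr.1.1 pr.1.2 pr.2))
    -- the spider
    set A : Set Pt := ⋃ C ∈ 𝒟.attach, Rect (p C.1 C.2) ε with hAdef
    have hmemA : ∀ x : Pt, x ∈ A ↔ ∃ C : {C // C ∈ 𝒟}, x ∈ Rect (p C.1 C.2) ε := by
      intro x
      rw [hAdef]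
      simp [Set.mem_iUnion, Finset.mem_attach]
    have hAcl : IsClosed A := by
      rw [hAdef]
      exact Set.Finite.isClosed_biUnion (𝒟.attach.finite_toSet) (fun C _ => Rect_closed _ _)
    have hApoly : IsPolygon A := by
      rw [hAdef]
      exact polygon_biUnion _ (Finset.attach_nonempty_iff.mpr h𝒟ne) _
        (fun C _ => Rect_polygon (hp2 C.1 C.2) hεpos)
    obtain ⟨C₀, hC₀⟩ := h𝒟ne
    have hRsubA : ∀ (C : Set Pt) (hC : C ∈ 𝒟), Rect (p C hC) ε ⊆ A := by
      intro C hC x hx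
      exact (hmemA x).mpr ⟨⟨C, hC⟩, hx⟩
    have h0A : (0:Pt) ∈ A := hRsubA C₀ hC₀ (ORect_subset _ _ (zero_mem_ORect _ hεpos))
    have hOsubA : ∀ (C : Set Pt) (hC : C ∈ 𝒟), ORect (p C hC) ε ⊆ interior A := fun C hC =>
      interior_maximal ((ORect_subset _ _).trans (hRsubA C hC)) (ORect_open _ _)
    -- boundedness
    choose Mf hMf1 hMf2 using (fun C : {C // C ∈ 𝒟} => Rect_bound (hp2 C.1 C.2) hεpos)
    obtain ⟨M, hMpos, hMub⟩ := finset_ub 𝒟.attach Mf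
    have hbdd : ∀ x ∈ A, ‖x‖ < M := by
      intro x hx
      obtain ⟨C, hC⟩ := (hmemA x).mp hx
      exact lt_of_lt_of_le (hMf2 C x hC) (hMub C (Finset.mem_attach _ _))
    have hstar : ∀ y ∈ A, ∀ s : ℝ, 0 ≤ s → s ≤ 1 → s • y ∈ A := by
      intro y hy s hs0 hs1
      obtain ⟨C, hC⟩ := (hmemA y).mp hy
      exact (hmemA _).mpr ⟨C, Rect_star _ _ hC hs0 hs1⟩
    obtain ⟨hAc_pre, hAc_ne, -⟩ := star_compl hMpos hbdd hstar h0A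
    -- the chosen generic points avoid the spider
    have hqA : ∀ (C : Set Pt) (hC : C ∈ 𝒟), q C hC ∈ Aᶜ := by
      intro C hC hqmem
      obtain ⟨D, hmem⟩ := (hmemA _).mp hqmem
      have hb := hεlt (⟨C, hC⟩, D)
        (Finset.mem_product.mpr ⟨Finset.mem_attach _ _, Finset.mem_attach _ _⟩)
      rw [mem_Rect_iff] at hmem
      have habs : |dot (rot (p D.1 D.2)) (q C hC)| ≤ ε :=
        abs_le.mpr ⟨by linarith [hmem.2.1], hmem.1⟩
      simp only at hb
      linarith
    -- W₂ is preconnected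
    obtain ⟨zb, hzbAc⟩ := hAc_ne
    have hW2 : IsPreconnected (rᶜ ∪ Aᶜ) := by
      apply anchored zb (Or.inr hzbAc)
      intro w hw
      rcases hw with hw | hw
      · obtain ⟨δ, hδ, hball⟩ := Metric.isOpen_iff.mp hrco w hw
        obtain ⟨C, hC, z, hz⟩ := reach w hw (ball w δ) isOpen_ball (mem_ball_self hδ)
        refine ⟨ball w δ ∪ C ∪ Aᶜ, ?_, ?_, ?_, ?_⟩
        · apply chain3 (convex_ball w δ).isPreconnected (h𝒟sub C hC).2.1.isPreconnected hAc_pre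
          · exact ⟨z, hz.1.1, hz.2⟩
          · exact ⟨q C hC, hq1 C hC, hqA C hC⟩
        · intro y hy
          rcases hy with (hy | hy) | hy
          · exact Or.inl (hball hy)
          · exact Or.inl ((h𝒟sub C hC).2.2.1 hy)
          · exact Or.inr hy
        · exact Or.inl (Or.inl (mem_ball_self hδ))
        · exact Or.inr hzbAc
      · exact ⟨Aᶜ, hAc_pre, fun y hy => Or.inr hy, hw, hzbAc⟩
    -- W₁ is preconnected
    have hiA : (closure Aᶜ)ᶜ = interior A := by rw [closure_compl, compl_compl]
    have hW1 : IsPreconnected (rᶜ ∪ (closure Aᶜ)ᶜ) := by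
      rw [hiA]
      apply anchored 0 (Or.inr (hOsubA C₀ hC₀ (zero_mem_ORect _ hεpos)))
      intro w hw
      rcases hw with hw | hw
      · obtain ⟨δ, hδ, hball⟩ := Metric.isOpen_iff.mp hrco w hw
        obtain ⟨C, hC, z, hz⟩ := reach w hw (ball w δ) isOpen_ball (mem_ball_self hδ)
        refine ⟨ball w δ ∪ C ∪ ORect (p C hC) ε, ?_, ?_, ?_, ?_⟩
        · apply chain3 (convex_ball w δ).isPreconnected (h𝒟sub C hC).2.1.isPreconnected
            (ORect_convex _ _).isPreconnected
          · exact ⟨z, hz.1.1, hz.2⟩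
          · exact ⟨p C hC, hp1 C hC, v_mem_ORect _ hεpos⟩
        · intro y hy
          rcases hy with (hy | hy) | hy
          · exact Or.inl (hball hy)
          · exact Or.inl ((h𝒟sub C hC).2.2.1 hy)
          · exact Or.inr (hOsubA C hC hy)
        · exact Or.inl (Or.inl (mem_ball_self hδ))
        · exact Or.inr (zero_mem_ORect _ hεpos)
      · obtain ⟨δ, hδ, hball⟩ := Metric.isOpen_iff.mp isOpen_interior w hw
        have hdense : Dense (⋂ C ∈ 𝒟.attach, RectGood (p C.1 C.2) ε) :=
          dense_biInter _ _ (fun C _ => RectGood_open_dense (hp2 C.1 C.2) ε)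
        obtain ⟨z, hz1, hz2⟩ := hdense.inter_open_nonempty (ball w δ) isOpen_ball
          ⟨w, mem_ball_self hδ⟩
        have hzA : z ∈ A := interior_subset (hball hz1)
        obtain ⟨C, hC⟩ := (hmemA z).mp hzA
        have hzO : z ∈ ORect (p C.1 C.2) ε := by
          apply mem_ORect_of_good hC
          simp only [Set.mem_iInter] at hz2
          exact hz2 C (Finset.mem_attach _ _)
        refine ⟨ball w δ ∪ ORect (p C.1 C.2) ε, ?_, ?_, ?_, ?_⟩
        · exact IsPreconnected.union z hz1 hzO (convex_ball w δ).isPreconnected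
            (ORect_convex _ _).isPreconnected
        · intro y hy
          rcases hy with hy | hy
          · exact Or.inr (hball hy)
          · exact Or.inr (hOsubA C.1 C.2 hy)
        · exact Or.inl (mem_ball_self hδ)
        · exact Or.inr (zero_mem_ORect _ hεpos)
    obtain ⟨x₀, hx₀⟩ := hne
    refine ⟨closure (interior (r ∩ closure Aᶜ)), closure (interior (r ∩ A)), ?_, ?_, ?_, ?_, ?_⟩
    · exact IsPolygon.inf r (closure Aᶜ) hr (IsPolygon.compl A hApoly)
    · exact IsPolygon.inf r A hr hApoly
    · -- the union is r
      apply subset_antisymm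
      · have hint : interior r ⊆
            closure (interior (r ∩ closure Aᶜ)) ∪ closure (interior (r ∩ A)) := by
          intro x hx
          by_cases hxA : x ∈ A
          · right
            obtain ⟨C, hC⟩ := (hmemA x).mp hxA
            have hxcl : x ∈ closure (interior (Rect (p C.1 C.2) ε)) := by
              rw [Rect_regular (hp2 C.1 C.2) hεpos]
              exact hC
            rw [_root_.mem_closure_iff] at hxcl ⊢
            intro o ho hxo
            obtain ⟨z, hz1, hz2⟩ := hxcl (o ∩ interior r) (ho.inter isOpen_interior) ⟨hxo, hx⟩
            refine ⟨z, hz1.1, ?_⟩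
            have hsub : interior r ∩ interior (Rect (p C.1 C.2) ε) ⊆ interior (r ∩ A) := by
              apply interior_maximal
              · exact fun y hy => ⟨interior_subset hy.1, hRsubA C.1 C.2 (interior_subset hy.2)⟩
              · exact isOpen_interior.inter isOpen_interior
            exact hsub ⟨hz1.2, hz2⟩
          · left
            apply subset_closure
            have hsub : interior r ∩ Aᶜ ⊆ interior (r ∩ closure Aᶜ) := by
              apply interior_maximal
              · exact fun y hy => ⟨interior_subset hy.1, subset_closure hy.2⟩
              · exact isOpen_interior.inter hAcl.isOpen_compl
            exact hsub ⟨hx, hxA⟩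
        calc r = closure (interior r) := hreg.symm
          _ ⊆ _ := closure_minimal hint (isClosed_closure.union isClosed_closure)
      · apply union_subset
        · exact closure_minimal (interior_subset.trans (fun z hz => hz.1)) hrcl
        · exact closure_minimal (interior_subset.trans (fun z hz => hz.1)) hrcl
    · exact master hreg isClosed_closure hW1 ⟨x₀, Or.inl hx₀⟩
    · exact master hreg hAcl hW2 ⟨x₀, Or.inl hx₀⟩
  · -- degenerate case : r = ℝ²
    rw [Set.not_nonempty_iff_eq_empty, Set.compl_empty_iff] at hne
    have h1ne : ((fun _ => 1 : Pt)) ≠ 0 := by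
      intro h
      have := congrFun h 0
      norm_num at this
    have h2ne : ((fun _ => -1 : Pt)) ≠ 0 := by
      intro h
      have := congrFun h 0
      norm_num at this
    refine ⟨HP (fun _ => 1) 0, HP (fun _ => -1) 0,
      HP_polygon h1ne 0, HP_polygon h2ne 0, ?_, ?_, ?_⟩
    · rw [hne]
      apply subset_antisymm _ (subset_univ _)
      intro x _
      by_cases h : dot (fun _ => 1) x ≤ 0
      · exact Or.inl h
      · right
        show dot (fun _ => -1) x ≤ 0
        simp only [dot] at h ⊢
        linarith
    · refine ⟨⟨(fun _ => 1 : Pt), ?_⟩, ?_⟩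
      · show ¬((fun _ => 1 : Pt) ∈ HP (fun _ => 1) 0)
        simp only [HP, mem_setOf_eq, dot, not_le]
        norm_num
      · have hco : (HP ((fun _ => 1) : Pt) 0)ᶜ = {x : Pt | 0 < dot (fun _ => 1) x} := by
          ext x
          simp only [HP, mem_compl_iff, mem_setOf_eq, not_le]
        rw [hco]
        exact (convex_halfSpace_gt (isLinearMap_dot _) 0).isPreconnected
    · refine ⟨⟨(fun _ => -1 : Pt), ?_⟩, ?_⟩
      · show ¬((fun _ => -1 : Pt) ∈ HP (fun _ => -1) 0)
        simp only [HP, mem_setOf_eq, dot, not_le]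
        norm_num
      · have hco : (HP ((fun _ => -1) : Pt) 0)ᶜ = {x : Pt | 0 < dot (fun _ => -1) x} := by
          ext x
          simp only [HP, mem_compl_iff, mem_setOf_eq, not_le]
        rw [hco]
        exact (convex_halfSpace_gt (isLinearMap_dot _) 0).isPreconnected
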